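/- Let W_j denote the expected discounted return when executing π under dynamics T̂ for the first j steps and dynamics T thereafter. Then W_{j+1} − W_j = γ^{j+1} · E_{s_j,a_j ∼ π,T̂}[G^π(s_j,a_j)], where the expectation is over the state-action pair at time j when rolling out π in T̂ from μ₀. -/

import Mathlib

open scoped BigOperators
open Filter Topology Classical

section MDP

variable {S A : Type*} [Fintype S] [Fintype A]

/-- π is a valid stochastic policy. -/
def IsPolicy (π : S → A → ℝ) : Prop :=
  (∀ s a, 0 ≤ π s a) ∧ ∀ s, ∑ a, π s a = 1

/-- T is a valid transition kernel. -/
def IsKernel (T : S → A → S → ℝ) : Prop :=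
  (∀ s a s', 0 ≤ T s a s') ∧ ∀ s a, ∑ s', T s a s' = 1

/-- μ is a probability distribution on states. -/
def IsDist (μ : S → ℝ) : Prop :=
  (∀ s, 0 ≤ μ s) ∧ ∑ s, μ s = 1

/-- Distribution of the state at time t under policy π and dynamics T, from μ0. -/
def stateDist (T : S → A → S → ℝ) (π : S → A → ℝ) (μ0 : S → ℝ) : ℕ → S → ℝ
  | 0 => μ0
  | t + 1 => fun s' => ∑ s, ∑ a, stateDist T π μ0 t s * π s a * T s a s'

/-- Unnormalized discounted occupancy measure ρ^π_T(s,a). -/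
noncomputable def occupancy (γ : ℝ) (T : S → A → S → ℝ) (π : S → A → ℝ)
    (μ0 : S → ℝ) (s : S) (a : A) : ℝ :=
  π s a * ∑' t : ℕ, γ ^ t * stateDist T π μ0 t s

/-- Improper expectation Ē of f with respect to the occupancy measure. -/
noncomputable def expOcc (γ : ℝ) (T : S → A → S → ℝ) (π : S → A → ℝ)
    (μ0 : S → ℝ) (f : S → A → ℝ) : ℝ :=
  ∑ s, ∑ a, occupancy γ T π μ0 s a * f s a

/-- Expected discounted return η_M(π). -/
noncomputable def ret (γ : ℝ) (T : S → A → S → ℝ) (π : S → A → ℝ)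
    (μ0 : S → ℝ) (r : S → A → ℝ) : ℝ :=
  ∑' t : ℕ, γ ^ t * ∑ s, ∑ a, stateDist T π μ0 t s * π s a * r s a

/-- Value function V_M^π(s): return starting from the Dirac distribution at s. -/
noncomputable def value (γ : ℝ) (T : S → A → S → ℝ) (π : S → A → ℝ)
    (r : S → A → ℝ) (s0 : S) : ℝ :=
  ret γ T π (fun s => if s = s0 then 1 else 0) r

/-- G^π(s,a) = E_{s'∼T̂(s,a)}[V_M^π(s')] − E_{s'∼T(s,a)}[V_M^π(s')]. -/
noncomputable def Gpi (γ : ℝ) (T Th : S → A → S → ℝ) (π : S → A → ℝ)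
    (r : S → A → ℝ) (s : S) (a : A) : ℝ :=
  (∑ s', Th s a s' * value γ T π r s') - ∑ s', T s a s' * value γ T π r s'

/-- Total variation distance between two distributions on a finite set. -/
noncomputable def tvDist (P Q : S → ℝ) : ℝ :=
  ⨆ E : Finset S, |(∑ s ∈ E, P s) - ∑ s ∈ E, Q s|

/-- Integral probability metric induced by a function class F. -/
noncomputable def ipm (F : Set (S → ℝ)) (P Q : S → ℝ) : ℝ :=
  sSup {x : ℝ | ∃ f ∈ F, x = |(∑ s, P s * f s) - ∑ s, Q s * f s|}


/-- Return of executing π under dynamics T̂ for the first j steps, then T thereafter. -/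
noncomputable def Wmix (γ : ℝ) (T Th : S → A → S → ℝ) (π : S → A → ℝ)
    (μ0 : S → ℝ) (r : S → A → ℝ) (j : ℕ) : ℝ :=
  (∑ t ∈ Finset.range j, γ ^ t * ∑ s, ∑ a, stateDist Th π μ0 t s * π s a * r s a)
    + γ ^ j * ∑ s, stateDist Th π μ0 j s * value γ T π r s

/-! ### Auxiliary lemmas -/

private lemma swap3 {α β δ : Type*} [Fintype α] [Fintype β] [Fintype δ]
    (F : α → β → δ → ℝ) :
    ∑ a, ∑ b, ∑ c, F a b c = ∑ c, ∑ a, ∑ b, F a b c :=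
  (Finset.sum_congr rfl fun _ _ => Finset.sum_comm).trans Finset.sum_comm

private lemma stateDist_isDist (T : S → A → S → ℝ) (hT : IsKernel T)
    (π : S → A → ℝ) (hπ : IsPolicy π) {μ0 : S → ℝ} (hμ : IsDist μ0) :
    ∀ t, IsDist (stateDist T π μ0 t)
  | 0 => hμ
  | (t+1) => by
    obtain ⟨h1, h2⟩ := stateDist_isDist T hT π hπ hμ t
    constructor
    · intro s'
      exact Finset.sum_nonneg fun s _ => Finset.sum_nonneg fun a _ =>
        mul_nonneg (mul_nonneg (h1 s) (hπ.1 s a)) (hT.1 s a s')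
    · show ∑ s', ∑ s, ∑ a, stateDist T π μ0 t s * π s a * T s a s' = 1
      calc ∑ s', ∑ s, ∑ a, stateDist T π μ0 t s * π s a * T s a s'
          = ∑ s, ∑ s', ∑ a, stateDist T π μ0 t s * π s a * T s a s' := Finset.sum_comm
        _ = ∑ s, ∑ a, ∑ s', stateDist T π μ0 t s * π s a * T s a s' :=
            Finset.sum_congr rfl fun s _ => Finset.sum_comm
        _ = ∑ s, ∑ a, stateDist T π μ0 t s * π s a := by
            simp only [← Finset.mul_sum, hT.2, mul_one]
        _ = ∑ s, stateDist T π μ0 t s := by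
            simp only [← Finset.mul_sum, hπ.2, mul_one]
        _ = 1 := h2

private lemma stateDist_shift (T : S → A → S → ℝ) (π : S → A → ℝ) (μ0 : S → ℝ) :
    ∀ t, stateDist T π μ0 (t+1) = stateDist T π (stateDist T π μ0 1) t
  | 0 => rfl
  | (t+1) => by
    show (fun s' => ∑ s, ∑ a, stateDist T π μ0 (t+1) s * π s a * T s a s') = _
    rw [stateDist_shift T π μ0 t]
    rfl

private lemma sum_linear_push (c : S → ℝ) (d : S → S → ℝ) (w : S → A → ℝ) :
    ∑ s, ∑ a, (∑ s1, c s1 * d s1 s) * w s a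
      = ∑ s1, c s1 * ∑ s, ∑ a, d s1 s * w s a := by
  calc ∑ s, ∑ a, (∑ s1, c s1 * d s1 s) * w s a
      = ∑ s, ∑ a, ∑ s1, c s1 * (d s1 s * w s a) := by
        refine Finset.sum_congr rfl fun s _ => Finset.sum_congr rfl fun a _ => ?_
        rw [Finset.sum_mul]
        exact Finset.sum_congr rfl fun s1 _ => by ring
    _ = ∑ s1, ∑ s, ∑ a, c s1 * (d s1 s * w s a) := swap3 _
    _ = ∑ s1, c s1 * ∑ s, ∑ a, d s1 s * w s a := by
        simp only [Finset.mul_sum]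

private lemma stateDist_linear (T : S → A → S → ℝ) (π : S → A → ℝ) (μ0 : S → ℝ) :
    ∀ t s, stateDist T π μ0 t s
      = ∑ s1, μ0 s1 * stateDist T π (fun x => if x = s1 then 1 else 0) t s
  | 0, s => by simp [stateDist]
  | (t+1), s' => by
    show ∑ s, ∑ a, stateDist T π μ0 t s * π s a * T s a s' = _
    calc ∑ s, ∑ a, stateDist T π μ0 t s * π s a * T s a s'
        = ∑ s, ∑ a, (∑ s1, μ0 s1 *
            stateDist T π (fun x => if x = s1 then 1 else 0) t s) * (π s a * T s a s') := by
          refine Finset.sum_congr rfl fun s _ => Finset.sum_congr rfl fun a _ => ?_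
          rw [stateDist_linear T π μ0 t s, mul_assoc]
      _ = ∑ s1, μ0 s1 * ∑ s, ∑ a,
            stateDist T π (fun x => if x = s1 then 1 else 0) t s * (π s a * T s a s') :=
          sum_linear_push _ _ _
      _ = ∑ s1, μ0 s1 * stateDist T π (fun x => if x = s1 then 1 else 0) (t+1) s' := by
          refine Finset.sum_congr rfl fun s1 _ => ?_
          congr 1
          show _ = ∑ s, ∑ a, stateDist T π (fun x => if x = s1 then 1 else 0) t s * π s a * T s a s'
          exact Finset.sum_congr rfl fun s _ => Finset.sum_congr rfl fun a _ => (mul_assoc _ _ _).symm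

/-- The reward collected at time t. -/
noncomputable def retTerm (T : S → A → S → ℝ) (π : S → A → ℝ) (μ0 : S → ℝ)
    (r : S → A → ℝ) (t : ℕ) : ℝ :=
  ∑ s, ∑ a, stateDist T π μ0 t s * π s a * r s a

private lemma isDist_dirac (s1 : S) : IsDist (fun x : S => if x = s1 then (1:ℝ) else 0) := by
  constructor
  · intro s; dsimp only; split <;> norm_num
  · simp

private lemma retTerm_bound (T : S → A → S → ℝ) (hT : IsKernel T)
    (π : S → A → ℝ) (hπ : IsPolicy π) {μ0 : S → ℝ} (hμ : IsDist μ0)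
    (r : S → A → ℝ) (t : ℕ) :
    |retTerm T π μ0 r t| ≤ ∑ s, ∑ a, |r s a| := by
  obtain ⟨h1, h2⟩ := stateDist_isDist T hT π hπ hμ t
  calc |∑ s, ∑ a, stateDist T π μ0 t s * π s a * r s a|
      ≤ ∑ s, |∑ a, stateDist T π μ0 t s * π s a * r s a| := Finset.abs_sum_le_sum_abs _ _
    _ ≤ ∑ s, ∑ a, |stateDist T π μ0 t s * π s a * r s a| :=
        Finset.sum_le_sum fun s _ => Finset.abs_sum_le_sum_abs _ _
    _ ≤ ∑ s, ∑ a, |r s a| := by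
        refine Finset.sum_le_sum fun s _ => Finset.sum_le_sum fun a _ => ?_
        rw [abs_mul, abs_mul, abs_of_nonneg (h1 s), abs_of_nonneg (hπ.1 s a)]
        have hd1 : stateDist T π μ0 t s ≤ 1 := by
          have := Finset.single_le_sum (fun i _ => h1 i) (Finset.mem_univ s)
          rwa [h2] at this
        have hp1 : π s a ≤ 1 := by
          have := Finset.single_le_sum (fun i _ => hπ.1 s i) (Finset.mem_univ a)
          rwa [hπ.2 s] at this
        calc stateDist T π μ0 t s * π s a * |r s a|
            ≤ 1 * |r s a| :=
              mul_le_mul_of_nonneg_right (mul_le_one₀ hd1 (hπ.1 s a) hp1) (abs_nonneg _)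
          _ = |r s a| := one_mul _

private lemma summable_retTerm (γ : ℝ) (hγ0 : 0 ≤ γ) (hγ1 : γ < 1)
    (T : S → A → S → ℝ) (hT : IsKernel T)
    (π : S → A → ℝ) (hπ : IsPolicy π) {μ0 : S → ℝ} (hμ : IsDist μ0)
    (r : S → A → ℝ) :
    Summable (fun t => γ ^ t * retTerm T π μ0 r t) := by
  refine Summable.of_norm_bounded (g := fun t => (∑ s, ∑ a, |r s a|) * γ ^ t)
    ((summable_geometric_of_lt_one hγ0 hγ1).mul_left _) fun t => ?_
  rw [Real.norm_eq_abs, abs_mul, abs_pow, abs_of_nonneg hγ0, mul_comm]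
  exact mul_le_mul_of_nonneg_right (retTerm_bound T hT π hπ hμ r t) (pow_nonneg hγ0 t)

private lemma retTerm_dirac_succ (T : S → A → S → ℝ) (π : S → A → ℝ)
    (r : S → A → ℝ) (s0 : S) (t : ℕ) :
    retTerm T π (fun x => if x = s0 then 1 else 0) r (t+1)
      = ∑ s1, (∑ a, π s0 a * T s0 a s1) *
          retTerm T π (fun x => if x = s1 then 1 else 0) r t := by
  have hnu : ∀ s1, stateDist T π (fun x => if x = s0 then 1 else 0) 1 s1
      = ∑ a, π s0 a * T s0 a s1 := by
    intro s1
    show ∑ s, ∑ a, (if s = s0 then (1:ℝ) else 0) * π s a * T s a s1 = _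
    simp [ite_mul]
  unfold retTerm
  calc ∑ s, ∑ a, stateDist T π (fun x => if x = s0 then 1 else 0) (t+1) s * π s a * r s a
      = ∑ s, ∑ a, (∑ s1, (∑ a, π s0 a * T s0 a s1) *
          stateDist T π (fun x => if x = s1 then 1 else 0) t s) * (π s a * r s a) := by
        refine Finset.sum_congr rfl fun s _ => Finset.sum_congr rfl fun a _ => ?_
        rw [stateDist_shift, stateDist_linear T π _ t s, mul_assoc]
        congr 1
        exact Finset.sum_congr rfl fun s1 _ => by rw [hnu]
    _ = ∑ s1, (∑ a, π s0 a * T s0 a s1) * ∑ s, ∑ a,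
          stateDist T π (fun x => if x = s1 then 1 else 0) t s * (π s a * r s a) :=
        sum_linear_push _ _ _
    _ = _ := by
        refine Finset.sum_congr rfl fun s1 _ => ?_
        congr 1
        exact Finset.sum_congr rfl fun s _ => Finset.sum_congr rfl fun a _ => (mul_assoc _ _ _).symm

private lemma value_bellman (γ : ℝ) (hγ0 : 0 < γ) (hγ1 : γ < 1)
    (T : S → A → S → ℝ) (hT : IsKernel T)
    (π : S → A → ℝ) (hπ : IsPolicy π) (r : S → A → ℝ) (s0 : S) :
    value γ T π r s0 = (∑ a, π s0 a * r s0 a)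
      + γ * ∑ a, ∑ s', π s0 a * T s0 a s' * value γ T π r s' := by
  have hsum : ∀ s1 : S, Summable (fun t =>
      γ ^ t * retTerm T π (fun x => if x = s1 then 1 else 0) r t) := fun s1 =>
    summable_retTerm γ hγ0.le hγ1 T hT π hπ (isDist_dirac s1) r
  have hval : ∀ s1 : S, value γ T π r s1
      = ∑' t, γ ^ t * retTerm T π (fun x => if x = s1 then 1 else 0) r t := fun _ => rfl
  rw [hval s0, Summable.tsum_eq_zero_add (hsum s0)]
  congr 1
  · simp [retTerm, stateDist]
  · have ht : ∀ t : ℕ, γ ^ (t+1) * retTerm T π (fun x => if x = s0 then 1 else 0) r (t+1)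
        = γ * ∑ s1, (∑ a, π s0 a * T s0 a s1) *
            (γ ^ t * retTerm T π (fun x => if x = s1 then 1 else 0) r t) := by
      intro t
      rw [retTerm_dirac_succ, Finset.mul_sum, Finset.mul_sum]
      exact Finset.sum_congr rfl fun s1 _ => by ring
    calc ∑' t, γ ^ (t+1) * retTerm T π (fun x => if x = s0 then 1 else 0) r (t+1)
        = ∑' t, γ * ∑ s1, (∑ a, π s0 a * T s0 a s1) *
            (γ ^ t * retTerm T π (fun x => if x = s1 then 1 else 0) r t) :=
          tsum_congr ht
      _ = γ * ∑' t, ∑ s1, (∑ a, π s0 a * T s0 a s1) *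
            (γ ^ t * retTerm T π (fun x => if x = s1 then 1 else 0) r t) :=
          tsum_mul_left
      _ = γ * ∑ s1, ∑' t, (∑ a, π s0 a * T s0 a s1) *
            (γ ^ t * retTerm T π (fun x => if x = s1 then 1 else 0) r t) := by
          rw [Summable.tsum_finsetSum fun s1 _ => (hsum s1).mul_left _]
      _ = γ * ∑ s1, (∑ a, π s0 a * T s0 a s1) * value γ T π r s1 := by
          congr 1
          refine Finset.sum_congr rfl fun s1 _ => ?_
          rw [tsum_mul_left, hval s1]
      _ = γ * ∑ a, ∑ s', π s0 a * T s0 a s' * value γ T π r s' := by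
          congr 1
          rw [Finset.sum_comm]
          refine Finset.sum_congr rfl fun s1 _ => ?_
          rw [Finset.sum_mul]

/-- Key step of the telescoping lemma:
W_{j+1} − W_j = γ^{j+1} · E_{s_j,a_j ∼ π,T̂}[G^π(s_j,a_j)]. -/
theorem Wmix_succ_sub (γ : ℝ) (hγ0 : 0 < γ) (hγ1 : γ < 1)
    (T Th : S → A → S → ℝ) (hT : IsKernel T) (hTh : IsKernel Th)
    (μ0 : S → ℝ) (hμ : IsDist μ0) (r : S → A → ℝ)
    (rmax : ℝ) (hr : ∀ s a, |r s a| ≤ rmax)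
    (π : S → A → ℝ) (hπ : IsPolicy π) :
    ∀ j : ℕ, Wmix γ T Th π μ0 r (j + 1) - Wmix γ T Th π μ0 r j
      = γ ^ (j + 1) * ∑ s, ∑ a, stateDist Th π μ0 j s * π s a * Gpi γ T Th π r s a := by
  intro j
  have h1 : ∑ s', stateDist Th π μ0 (j+1) s' * value γ T π r s'
      = ∑ s, ∑ a, stateDist Th π μ0 j s * π s a * ∑ s', Th s a s' * value γ T π r s' := by
    show ∑ s', (∑ s, ∑ a, stateDist Th π μ0 j s * π s a * Th s a s') * value γ T π r s' = _
    calc ∑ s', (∑ s, ∑ a, stateDist Th π μ0 j s * π s a * Th s a s') * value γ T π r s'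
        = ∑ s', ∑ s, ∑ a, stateDist Th π μ0 j s * π s a * Th s a s' * value γ T π r s' := by
          refine Finset.sum_congr rfl fun s' _ => ?_
          rw [Finset.sum_mul]
          exact Finset.sum_congr rfl fun s _ => (Finset.sum_mul _ _ _)
      _ = ∑ s, ∑ a, ∑ s', stateDist Th π μ0 j s * π s a * Th s a s' * value γ T π r s' := by
          rw [swap3, swap3]
      _ = ∑ s, ∑ a, stateDist Th π μ0 j s * π s a * ∑ s', Th s a s' * value γ T π r s' := by
          refine Finset.sum_congr rfl fun s _ => Finset.sum_congr rfl fun a _ => ?_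
          rw [Finset.mul_sum]
          exact Finset.sum_congr rfl fun s' _ => by ring
  have h2 : ∑ s, stateDist Th π μ0 j s * value γ T π r s
      = (∑ s, ∑ a, stateDist Th π μ0 j s * π s a * r s a)
        + γ * ∑ s, ∑ a, stateDist Th π μ0 j s * π s a * ∑ s', T s a s' * value γ T π r s' := by
    calc ∑ s, stateDist Th π μ0 j s * value γ T π r s
        = ∑ s, stateDist Th π μ0 j s * ((∑ a, π s a * r s a)
            + γ * ∑ a, ∑ s', π s a * T s a s' * value γ T π r s') :=
          Finset.sum_congr rfl fun s _ => by rw [value_bellman γ hγ0 hγ1 T hT π hπ r s]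
      _ = _ := by
          simp only [mul_add, Finset.sum_add_distrib]
          congr 1
          · refine Finset.sum_congr rfl fun s _ => ?_
            rw [Finset.mul_sum]
            exact Finset.sum_congr rfl fun a _ => by ring
          · rw [Finset.mul_sum]
            refine Finset.sum_congr rfl fun s _ => ?_
            simp only [Finset.mul_sum]
            exact Finset.sum_congr rfl fun a _ => Finset.sum_congr rfl fun s' _ => by ring
  unfold Wmix
  rw [Finset.sum_range_succ, h1, h2]
  simp only [Gpi, mul_sub, Finset.sum_sub_distrib]
  ring

end MDP
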